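/- Let k be a field and for α in k let H_α be the representation of the quiver Ẽ7 (with 5 source vertices of dimensions 2, 3, 3, 1, 1 and 3 sink vertices of dimensions 4, 2, 2) given by the linear maps A_1 : k^2 → k^4, A_2 : k^3 → k^4, A_3 : k^3 → k^4, B_1 : k^3 → k^2, C_1 : k^3 → k^2, B_2 : k^1 → k^2, C_2 : k^1 → k^2 with matrices A_1 = [[1,α],[1,1],[1,0],[0,1]], A_2 = [[1,0,0],[0,1,0],[0,0,1],[0,0,0]], A_3 = [[0,0,0],[0,0,1],[0,1,0],[1,0,0]], B_1 = C_1 = [[0,1,0],[0,0,1]], B_2 = C_2 = [[1],[0]]. Then each H_α is an indecomposable representation in which A_1, A_2, A_3, B_2, C_2 are injective and B_1, C_1 are surjective, and H_α is isomorphic to H_β only if α = β; in particular, Ẽ7 admits infinitely many pairwise nonisomorphic indecomposable representations of this form when k is infinite. -/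

import Mathlib

universe u

/-- A representation of the quiver `Ẽ₇` with the orientation used in the paper:
five source vertices of dimensions `r1, …, r5`, three sink vertices of dimensions
`t1, t2, t3`, and seven structure maps given by matrices. -/
structure RepE7 (k : Type u) [Field k] where
  r1 : ℕ
  r2 : ℕ
  r3 : ℕ
  r4 : ℕ
  r5 : ℕ
  t1 : ℕ
  t2 : ℕ
  t3 : ℕ
  A1 : Matrix (Fin t1) (Fin r1) k
  A2 : Matrix (Fin t1) (Fin r2) k
  B1 : Matrix (Fin t2) (Fin r2) k
  A3 : Matrix (Fin t1) (Fin r3) k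
  C1 : Matrix (Fin t3) (Fin r3) k
  B2 : Matrix (Fin t2) (Fin r4) k
  C2 : Matrix (Fin t3) (Fin r5) k

namespace RepE7

variable {k : Type u} [Field k]

/-- A (possibly rectangular) matrix is invertible if it has a two-sided inverse. -/
def TwoInv {m n : ℕ} (P : Matrix (Fin m) (Fin n) k) : Prop :=
  ∃ Q : Matrix (Fin n) (Fin m) k, P * Q = 1 ∧ Q * P = 1

/-- Isomorphism of representations of `Ẽ₇`: an invertible linear map at each of the
eight vertices commuting with the seven structure maps. -/
def IsoRep (H H' : RepE7 k) : Prop :=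
  ∃ (P1 : Matrix (Fin H'.r1) (Fin H.r1) k) (P2 : Matrix (Fin H'.r2) (Fin H.r2) k)
    (P3 : Matrix (Fin H'.r3) (Fin H.r3) k) (P4 : Matrix (Fin H'.r4) (Fin H.r4) k)
    (P5 : Matrix (Fin H'.r5) (Fin H.r5) k) (Q1 : Matrix (Fin H'.t1) (Fin H.t1) k)
    (Q2 : Matrix (Fin H'.t2) (Fin H.t2) k) (Q3 : Matrix (Fin H'.t3) (Fin H.t3) k),
    Q1 * H.A1 = H'.A1 * P1 ∧ Q1 * H.A2 = H'.A2 * P2 ∧ Q2 * H.B1 = H'.B1 * P2 ∧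
    Q1 * H.A3 = H'.A3 * P3 ∧ Q3 * H.C1 = H'.C1 * P3 ∧ Q2 * H.B2 = H'.B2 * P4 ∧
    Q3 * H.C2 = H'.C2 * P5 ∧
    TwoInv P1 ∧ TwoInv P2 ∧ TwoInv P3 ∧ TwoInv P4 ∧ TwoInv P5 ∧
    TwoInv Q1 ∧ TwoInv Q2 ∧ TwoInv Q3

/-- block direct sum of two matrices, reindexed to `Fin` of sums. -/
def bsum {m n m' n' : ℕ} (P : Matrix (Fin m) (Fin n) k) (P' : Matrix (Fin m') (Fin n') k) :
    Matrix (Fin (m + m')) (Fin (n + n')) k :=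
  (Matrix.fromBlocks P 0 0 P').submatrix finSumFinEquiv.symm finSumFinEquiv.symm

/-- vertexwise direct sum of two representations. -/
def dsum (H H' : RepE7 k) : RepE7 k where
  r1 := H.r1 + H'.r1
  r2 := H.r2 + H'.r2
  r3 := H.r3 + H'.r3
  r4 := H.r4 + H'.r4
  r5 := H.r5 + H'.r5
  t1 := H.t1 + H'.t1
  t2 := H.t2 + H'.t2
  t3 := H.t3 + H'.t3
  A1 := bsum H.A1 H'.A1
  A2 := bsum H.A2 H'.A2
  B1 := bsum H.B1 H'.B1
  A3 := bsum H.A3 H'.A3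
  C1 := bsum H.C1 H'.C1
  B2 := bsum H.B2 H'.B2
  C2 := bsum H.C2 H'.C2

/-- nonzero representation. -/
def Nonzero (H : RepE7 k) : Prop :=
  ¬ (H.r1 = 0 ∧ H.r2 = 0 ∧ H.r3 = 0 ∧ H.r4 = 0 ∧ H.r5 = 0 ∧
     H.t1 = 0 ∧ H.t2 = 0 ∧ H.t3 = 0)

/-- indecomposable representation: nonzero and not isomorphic to a direct sum of two
nonzero representations. -/
def Indec (H : RepE7 k) : Prop :=
  Nonzero H ∧ ∀ H₁ H₂ : RepE7 k, Nonzero H₁ → Nonzero H₂ → ¬ IsoRep H (dsum H₁ H₂)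

end RepE7

/-- the representation `H_α` of `Ẽ₇` from the proof of Lemma 8. -/
noncomputable def Hrep {k : Type u} [Field k] (α : k) : RepE7 k where
  r1 := 2
  r2 := 3
  r3 := 3
  r4 := 1
  r5 := 1
  t1 := 4
  t2 := 2
  t3 := 2
  A1 := !![1, α; 1, 1; 1, 0; 0, 1]
  A2 := !![1, 0, 0; 0, 1, 0; 0, 0, 1; 0, 0, 0]
  B1 := !![0, 1, 0; 0, 0, 1]
  A3 := !![0, 0, 0; 0, 0, 1; 0, 1, 0; 1, 0, 0]
  C1 := !![0, 1, 0; 0, 0, 1]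
  B2 := !![1; 0]
  C2 := !![1; 0]


section Aux

variable {k : Type u} [Field k]


lemma coreE7 {k : Type u} [Field k] (α β : k)
    (P1 : Matrix (Fin 2) (Fin 2) k) (P2 P3 : Matrix (Fin 3) (Fin 3) k)
    (P4 P5 : Matrix (Fin 1) (Fin 1) k) (Q1 : Matrix (Fin 4) (Fin 4) k)
    (Q2 Q3 : Matrix (Fin 2) (Fin 2) k)
    (h1 : Q1 * !![1,α;1,1;1,0;0,1] = !![1,β;1,1;1,0;0,1] * P1)
    (h2 : Q1 * !![(1:k),0,0;0,1,0;0,0,1;0,0,0] = !![(1:k),0,0;0,1,0;0,0,1;0,0,0] * P2)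
    (h3 : Q2 * !![(0:k),1,0;0,0,1] = !![(0:k),1,0;0,0,1] * P2)
    (h4 : Q1 * !![(0:k),0,0;0,0,1;0,1,0;1,0,0] = !![(0:k),0,0;0,0,1;0,1,0;1,0,0] * P3)
    (h5 : Q3 * !![(0:k),1,0;0,0,1] = !![(0:k),1,0;0,0,1] * P3)
    (h6 : Q2 * !![(1:k);0] = !![(1:k);0] * P4)
    (h7 : Q3 * !![(1:k);0] = !![(1:k);0] * P5) :
    ∃ l : k, P1 = l • 1 ∧ P2 = l • 1 ∧ P3 = l • 1 ∧ P4 = l • 1 ∧ P5 = l • 1 ∧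
      Q1 = l • 1 ∧ Q2 = l • 1 ∧ Q3 = l • 1 ∧ (α - β) * l = 0 := by
  have e00 := congrFun (congrFun h1 0) 0
  have e01 := congrFun (congrFun h1 0) 1
  have e10 := congrFun (congrFun h1 1) 0
  have e11 := congrFun (congrFun h1 1) 1
  have e20 := congrFun (congrFun h1 2) 0
  have e21 := congrFun (congrFun h1 2) 1
  have e30 := congrFun (congrFun h1 3) 0
  have e31 := congrFun (congrFun h1 3) 1
  have b00 := congrFun (congrFun h2 0) 0
  have b01 := congrFun (congrFun h2 0) 1
  have b02 := congrFun (congrFun h2 0) 2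
  have b10 := congrFun (congrFun h2 1) 0
  have b11 := congrFun (congrFun h2 1) 1
  have b12 := congrFun (congrFun h2 1) 2
  have b20 := congrFun (congrFun h2 2) 0
  have b21 := congrFun (congrFun h2 2) 1
  have b22 := congrFun (congrFun h2 2) 2
  have b30 := congrFun (congrFun h2 3) 0
  have b31 := congrFun (congrFun h2 3) 1
  have b32 := congrFun (congrFun h2 3) 2
  have c00 := congrFun (congrFun h3 0) 0
  have c01 := congrFun (congrFun h3 0) 1
  have c02 := congrFun (congrFun h3 0) 2
  have c10 := congrFun (congrFun h3 1) 0
  have c11 := congrFun (congrFun h3 1) 1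
  have c12 := congrFun (congrFun h3 1) 2
  have d00 := congrFun (congrFun h4 0) 0
  have d01 := congrFun (congrFun h4 0) 1
  have d02 := congrFun (congrFun h4 0) 2
  have d10 := congrFun (congrFun h4 1) 0
  have d11 := congrFun (congrFun h4 1) 1
  have d12 := congrFun (congrFun h4 1) 2
  have d20 := congrFun (congrFun h4 2) 0
  have d21 := congrFun (congrFun h4 2) 1
  have d22 := congrFun (congrFun h4 2) 2
  have d30 := congrFun (congrFun h4 3) 0
  have d31 := congrFun (congrFun h4 3) 1
  have d32 := congrFun (congrFun h4 3) 2
  have f00 := congrFun (congrFun h5 0) 0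
  have f01 := congrFun (congrFun h5 0) 1
  have f02 := congrFun (congrFun h5 0) 2
  have f10 := congrFun (congrFun h5 1) 0
  have f11 := congrFun (congrFun h5 1) 1
  have f12 := congrFun (congrFun h5 1) 2
  have ga00 := congrFun (congrFun h6 0) 0
  have ga10 := congrFun (congrFun h6 1) 0
  have gb00 := congrFun (congrFun h7 0) 0
  have gb10 := congrFun (congrFun h7 1) 0
  simp [Matrix.mul_apply, Fin.sum_univ_two, Fin.sum_univ_three, Fin.sum_univ_four, Fin.sum_univ_one, Matrix.vecHead, Matrix.vecTail] at e00 e01 e10 e11 e20 e21 e30 e31 b00 b01 b02 b10 b11 b12 b20 b21 b22 b30 b31 b32 c00 c01 c02 c10 c11 c12 d00 d01 d02 d10 d11 d12 d20 d21 d22 d30 d31 d32 f00 f01 f02 f10 f11 f12 ga00 ga10 gb00 gb10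

  -- zero entries of Q1
  have z01 : Q1 0 1 = 0 := d02
  have z02 : Q1 0 2 = 0 := d01
  have z03 : Q1 0 3 = 0 := d00
  have z10 : Q1 1 0 = 0 := by linear_combination b10 - c00
  have z12 : Q1 1 2 = 0 := by linear_combination d11 - f11 + gb10
  have z13 : Q1 1 3 = 0 := by linear_combination d10 - f10
  have z20 : Q1 2 0 = 0 := by linear_combination b20 - c10
  have z21 : Q1 2 1 = 0 := by linear_combination b21 - c11 + ga10
  have z23 : Q1 2 3 = 0 := by linear_combination d20 - f00
  have z30 : Q1 3 0 = 0 := b30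
  have z31 : Q1 3 1 = 0 := b31
  have z32 : Q1 3 2 = 0 := b32
  have p10 : P1 1 0 = 0 := by linear_combination z30 + z31 + z32 - e30
  have p01 : P1 0 1 = 0 := by linear_combination α * z20 + z21 + z23 - e21
  have p00 : P1 0 0 = Q1 2 2 := by linear_combination z20 + z21 - e20
  have p11 : P1 1 1 = Q1 3 3 := by linear_combination α * z30 + z31 - e31
  have g22 : Q1 2 2 = Q1 0 0 := by linear_combination -p00 - e00 + z01 + z02 - β * p10
  have g11 : Q1 1 1 = Q1 0 0 := by linear_combination e10 - z10 - z12 + p00 + p10 + g22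
  have g33 : Q1 3 3 = Q1 0 0 := by
    linear_combination -e11 + α * z10 + z13 - p01 - p11 + g11
  have hab : (α - β) * Q1 0 0 = 0 := by
    linear_combination e01 - z01 - z03 + p01 + β * p11 + β * g33
  have s1 : Q1 0 0 • (1 : Matrix (Fin 1) (Fin 1) k) = !![Q1 0 0] := by
    ext i j; fin_cases i <;> fin_cases j <;> simp
  have s2 : Q1 0 0 • (1 : Matrix (Fin 2) (Fin 2) k) = !![Q1 0 0,0;0,Q1 0 0] := by
    ext i j
    fin_cases i <;> fin_cases j <;>
      simp [Matrix.one_apply, Matrix.vecHead, Matrix.vecTail]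
  have s3 : Q1 0 0 • (1 : Matrix (Fin 3) (Fin 3) k) =
      !![Q1 0 0,0,0;0,Q1 0 0,0;0,0,Q1 0 0] := by
    ext i j
    fin_cases i <;> fin_cases j <;>
      simp [Matrix.one_apply, Matrix.vecHead, Matrix.vecTail]
  have s4 : Q1 0 0 • (1 : Matrix (Fin 4) (Fin 4) k) =
      !![Q1 0 0,0,0,0;0,Q1 0 0,0,0;0,0,Q1 0 0,0;0,0,0,Q1 0 0] := by
    ext i j
    fin_cases i <;> fin_cases j <;>
      simp [Matrix.one_apply, Matrix.vecHead, Matrix.vecTail]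
  have eta4 : Q1 = !![Q1 0 0, Q1 0 1, Q1 0 2, Q1 0 3; Q1 1 0, Q1 1 1, Q1 1 2, Q1 1 3;
      Q1 2 0, Q1 2 1, Q1 2 2, Q1 2 3; Q1 3 0, Q1 3 1, Q1 3 2, Q1 3 3] := by
    ext i j; fin_cases i <;> fin_cases j <;> rfl
  have eta1 : ∀ M : Matrix (Fin 1) (Fin 1) k, M = !![M 0 0] := by
    intro M; ext i j; fin_cases i <;> fin_cases j <;> rfl
  have P100 : P1 0 0 = Q1 0 0 := by linear_combination p00 + g22
  have P111 : P1 1 1 = Q1 0 0 := by linear_combination p11 + g33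
  have P200 : P2 0 0 = Q1 0 0 := by linear_combination -b00
  have P201 : P2 0 1 = 0 := by linear_combination -b01 + z01
  have P202 : P2 0 2 = 0 := by linear_combination -b02 + z02
  have P210 : P2 1 0 = 0 := by linear_combination -b10 + z10
  have P211 : P2 1 1 = Q1 0 0 := by linear_combination -b11 + g11
  have P212 : P2 1 2 = 0 := by linear_combination -b12 + z12
  have P220 : P2 2 0 = 0 := by linear_combination -b20 + z20
  have P221 : P2 2 1 = 0 := by linear_combination -b21 + z21
  have P222 : P2 2 2 = Q1 0 0 := by linear_combination -b22 + g22
  have P300 : P3 0 0 = Q1 0 0 := by linear_combination -d30 + g33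
  have P301 : P3 0 1 = 0 := by linear_combination -d31 + z32
  have P302 : P3 0 2 = 0 := by linear_combination -d32 + z31
  have P310 : P3 1 0 = 0 := by linear_combination -d20 + z23
  have P311 : P3 1 1 = Q1 0 0 := by linear_combination -d21 + g22
  have P312 : P3 1 2 = 0 := by linear_combination -d22 + z21
  have P320 : P3 2 0 = 0 := by linear_combination -d10 + z13
  have P321 : P3 2 1 = 0 := by linear_combination -d11 + z12
  have P322 : P3 2 2 = Q1 0 0 := by linear_combination -d12 + g11
  have P400 : P4 0 0 = Q1 0 0 := by linear_combination -ga00 + c01 - b11 + g11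
  have P500 : P5 0 0 = Q1 0 0 := by linear_combination -gb00 + f01 - d21 + g22
  have Q200 : Q2 0 0 = Q1 0 0 := by linear_combination c01 - b11 + g11
  have Q201 : Q2 0 1 = 0 := by linear_combination c02 - b12 + z12
  have Q211 : Q2 1 1 = Q1 0 0 := by linear_combination c12 - b22 + g22
  have Q300 : Q3 0 0 = Q1 0 0 := by linear_combination f01 - d21 + g22
  have Q301 : Q3 0 1 = 0 := by linear_combination f02 - d22 + z21
  have Q311 : Q3 1 1 = Q1 0 0 := by linear_combination f12 - d12 + g11
  refine ⟨Q1 0 0, ?_, ?_, ?_, ?_, ?_, ?_, ?_, ?_, hab⟩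
  · rw [Matrix.eta_fin_two P1, P100, p01, p10, P111, s2]
  · rw [Matrix.eta_fin_three P2, P200, P201, P202, P210, P211, P212, P220, P221,
      P222, s3]
  · rw [Matrix.eta_fin_three P3, P300, P301, P302, P310, P311, P312, P320, P321,
      P322, s3]
  · rw [eta1 P4, P400, s1]
  · rw [eta1 P5, P500, s1]
  · conv_lhs => rw [eta4]
    rw [z01, z02, z03, z10, z12, z13, z20, z21, z23, z30, z31, z32, g11, g22, g33, s4]
  · rw [Matrix.eta_fin_two Q2, Q200, Q201, ga10, Q211, s2]
  · rw [Matrix.eta_fin_two Q3, Q300, Q301, gb10, Q311, s2]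


lemma bsum_mul {m n p m' n' p' : ℕ} (P : Matrix (Fin m) (Fin n) k)
    (P' : Matrix (Fin m') (Fin n') k) (R : Matrix (Fin n) (Fin p) k)
    (R' : Matrix (Fin n') (Fin p') k) :
    RepE7.bsum P P' * RepE7.bsum R R' = RepE7.bsum (P * R) (P' * R') := by
  unfold RepE7.bsum
  rw [Matrix.submatrix_mul_equiv, Matrix.fromBlocks_multiply]
  simp

lemma matrix_one_eq_zero {s : ℕ} (h : (1 : Matrix (Fin s) (Fin s) k) = 0) : s = 0 := by
  by_contra hs
  have := congrFun (congrFun h ⟨0, Nat.pos_of_ne_zero hs⟩) ⟨0, Nat.pos_of_ne_zero hs⟩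
  simp [Matrix.one_apply] at this

lemma bsum_one_zero_eq_zero {m m' : ℕ}
    (h : RepE7.bsum (1 : Matrix (Fin m) (Fin m) k) (0 : Matrix (Fin m') (Fin m') k) = 0) :
    m = 0 := by
  by_contra hm
  unfold RepE7.bsum at h
  have := congrFun (congrFun h (Fin.castAdd m' ⟨0, Nat.pos_of_ne_zero hm⟩))
    (Fin.castAdd m' ⟨0, Nat.pos_of_ne_zero hm⟩)
  rw [Matrix.submatrix_apply, finSumFinEquiv_symm_apply_castAdd,
    Matrix.fromBlocks_apply₁₁] at this
  simp [Matrix.one_apply] at this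

lemma bsum_one_zero_eq_one {m m' : ℕ}
    (h : RepE7.bsum (1 : Matrix (Fin m) (Fin m) k) (0 : Matrix (Fin m') (Fin m') k) = 1) :
    m' = 0 := by
  by_contra hm
  unfold RepE7.bsum at h
  have := congrFun (congrFun h (Fin.natAdd m ⟨0, Nat.pos_of_ne_zero hm⟩))
    (Fin.natAdd m ⟨0, Nat.pos_of_ne_zero hm⟩)
  rw [Matrix.submatrix_apply, finSumFinEquiv_symm_apply_natAdd,
    Matrix.fromBlocks_apply₂₂] at this
  simp [Matrix.one_apply] at this

lemma Efacts {m m' : ℕ} (l : k)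
    (hE : RepE7.bsum (1 : Matrix (Fin m) (Fin m) k) (0 : Matrix (Fin m') (Fin m') k)
      = l • 1) :
    (l = 0 → m = 0) ∧ (l = 1 → m' = 0) ∧ (l * l ≠ l → m = 0 ∧ m' = 0) := by
  refine ⟨?_, ?_, ?_⟩
  · intro h0
    rw [h0, zero_smul] at hE
    exact bsum_one_zero_eq_zero hE
  · intro h1
    rw [h1, one_smul] at hE
    exact bsum_one_zero_eq_one hE
  · intro hne
    have hI : RepE7.bsum (1 : Matrix (Fin m) (Fin m) k) (0 : Matrix (Fin m') (Fin m') k) *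
        RepE7.bsum (1 : Matrix (Fin m) (Fin m) k) (0 : Matrix (Fin m') (Fin m') k) =
        RepE7.bsum (1 : Matrix (Fin m) (Fin m) k) (0 : Matrix (Fin m') (Fin m') k) := by
      rw [bsum_mul]; simp
    rw [hE] at hI
    have hI2 : (l * l - l) • (1 : Matrix (Fin (m + m')) (Fin (m + m')) k) = 0 := by
      rw [sub_smul]
      rw [Matrix.smul_mul, Matrix.mul_smul, smul_smul, Matrix.mul_one] at hI
      rw [hI]
      simp
    have h10 : (1 : Matrix (Fin (m + m')) (Fin (m + m')) k) = 0 := by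
      have := congrArg (fun M => (l * l - l)⁻¹ • M) hI2
      simpa [smul_smul, inv_mul_cancel₀ (sub_ne_zero.mpr hne)] using this
    have := matrix_one_eq_zero h10
    omega

lemma conj_eq {s p : ℕ} (Q : Matrix (Fin s) (Fin p) k) (Qi : Matrix (Fin p) (Fin s) k)
    (h1 : Q * Qi = 1) (E : Matrix (Fin s) (Fin s) k) (l : k)
    (he : Qi * E * Q = l • 1) : E = l • 1 := by
  have l1 : Q * (Qi * E * Q) * Qi = E := by
    rw [Matrix.mul_assoc Qi E Q, ← Matrix.mul_assoc Q Qi (E * Q), h1, Matrix.one_mul,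
      Matrix.mul_assoc, h1, Matrix.mul_one]
  rw [he] at l1
  rw [← l1, Matrix.mul_smul, Matrix.smul_mul, Matrix.mul_one, h1]

lemma sandwich {p q m m' n n' : ℕ} (A : Matrix (Fin p) (Fin q) k)
    (A₁ : Matrix (Fin m) (Fin n) k) (A₂ : Matrix (Fin m') (Fin n') k)
    (Q : Matrix (Fin (m + m')) (Fin p) k) (Qi : Matrix (Fin p) (Fin (m + m')) k)
    (P : Matrix (Fin (n + n')) (Fin q) k) (Pi : Matrix (Fin q) (Fin (n + n')) k)
    (hQ2 : Qi * Q = 1) (hP1 : P * Pi = 1)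
    (hrel : Q * A = RepE7.bsum A₁ A₂ * P) :
    (Qi * RepE7.bsum (1 : Matrix (Fin m) (Fin m) k) (0 : Matrix (Fin m') (Fin m') k) * Q)
      * A =
    A * (Pi * RepE7.bsum (1 : Matrix (Fin n) (Fin n) k) (0 : Matrix (Fin n') (Fin n') k)
      * P) := by
  have hb : Qi * RepE7.bsum A₁ A₂ = A * Pi := by
    have hb0 : Q * A * Pi = RepE7.bsum A₁ A₂ := by
      rw [hrel, Matrix.mul_assoc, hP1, Matrix.mul_one]
    rw [← hb0, Matrix.mul_assoc Q A Pi, ← Matrix.mul_assoc Qi Q (A * Pi), hQ2,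
      Matrix.one_mul]
  have hcomm : RepE7.bsum (1 : Matrix (Fin m) (Fin m) k) (0 : Matrix (Fin m') (Fin m') k)
      * RepE7.bsum A₁ A₂ = RepE7.bsum A₁ A₂ *
      RepE7.bsum (1 : Matrix (Fin n) (Fin n) k) (0 : Matrix (Fin n') (Fin n') k) := by
    rw [bsum_mul, bsum_mul]; simp
  calc (Qi * RepE7.bsum (1 : Matrix (Fin m) (Fin m) k) (0 : Matrix (Fin m') (Fin m') k) * Q) * A
      = Qi * (RepE7.bsum (1 : Matrix (Fin m) (Fin m) k) (0 : Matrix (Fin m') (Fin m') k) * (Q * A)) := by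
        rw [Matrix.mul_assoc, Matrix.mul_assoc]
    _ = Qi * (RepE7.bsum (1 : Matrix (Fin m) (Fin m) k) (0 : Matrix (Fin m') (Fin m') k) * RepE7.bsum A₁ A₂ * P) := by
        rw [hrel, Matrix.mul_assoc]
    _ = Qi * (RepE7.bsum A₁ A₂ * RepE7.bsum (1 : Matrix (Fin n) (Fin n) k) (0 : Matrix (Fin n') (Fin n') k) * P) := by rw [hcomm]
    _ = (Qi * RepE7.bsum A₁ A₂) * (RepE7.bsum (1 : Matrix (Fin n) (Fin n) k) (0 : Matrix (Fin n') (Fin n') k) * P) := by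
        rw [← Matrix.mul_assoc, ← Matrix.mul_assoc, Matrix.mul_assoc (Qi * RepE7.bsum A₁ A₂)]
    _ = A * (Pi * RepE7.bsum (1 : Matrix (Fin n) (Fin n) k) (0 : Matrix (Fin n') (Fin n') k) * P) := by
        rw [hb, Matrix.mul_assoc, Matrix.mul_assoc]

lemma iso_imp_eq (α β : k) (h : RepE7.IsoRep (Hrep α) (Hrep β)) : α = β := by
  obtain ⟨P1, P2, P3, P4, P5, Q1, Q2, Q3, hA1, hA2, hB1, hA3, hC1, hB2, hC2,
    _, _, _, _, _, _, ⟨Q2i, hQ2a, hQ2b⟩, _⟩ := h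
  obtain ⟨l, _, _, _, _, _, _, hQ2, _, hab⟩ :=
    coreE7 α β P1 P2 P3 P4 P5 Q1 Q2 Q3 hA1 hA2 hB1 hA3 hC1 hB2 hC2
  by_contra hne
  have hl : l = 0 := by
    rcases mul_eq_zero.mp hab with h' | h'
    · exact absurd (sub_eq_zero.mp h') hne
    · exact h'
  rw [hl, zero_smul] at hQ2
  subst hQ2
  replace hQ2a : (0 : Matrix (Fin (Hrep β).t2) (Fin (Hrep α).t2) k) * Q2i =
    (1 : Matrix (Fin (Hrep β).t2) (Fin (Hrep β).t2) k) := hQ2a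
  rw [Matrix.zero_mul] at hQ2a
  have := congrFun (congrFun hQ2a ⟨0, by simp [Hrep]⟩) ⟨0, by simp [Hrep]⟩
  simp [Matrix.one_apply] at this

lemma indecHrep (α : k) : (Hrep α).Indec := by
  constructor
  · intro h
    exact absurd h.1 (by simp [Hrep])
  intro H₁ H₂ hn1 hn2 hiso
  obtain ⟨P1, P2, P3, P4, P5, Q1, Q2, Q3, hA1, hA2, hB1, hA3, hC1, hB2, hC2,
    hTP1, hTP2, hTP3, hTP4, hTP5, hTQ1, hTQ2, hTQ3⟩ := hiso
  obtain ⟨P1i, hP1a, hP1b⟩ := hTP1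
  obtain ⟨P2i, hP2a, hP2b⟩ := hTP2
  obtain ⟨P3i, hP3a, hP3b⟩ := hTP3
  obtain ⟨P4i, hP4a, hP4b⟩ := hTP4
  obtain ⟨P5i, hP5a, hP5b⟩ := hTP5
  obtain ⟨Q1i, hQ1a, hQ1b⟩ := hTQ1
  obtain ⟨Q2i, hQ2a, hQ2b⟩ := hTQ2
  obtain ⟨Q3i, hQ3a, hQ3b⟩ := hTQ3
  have r1 := sandwich ((Hrep α).A1) H₁.A1 H₂.A1 Q1 Q1i P1 P1i hQ1b hP1a hA1
  have r2 := sandwich ((Hrep α).A2) H₁.A2 H₂.A2 Q1 Q1i P2 P2i hQ1b hP2a hA2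
  have r3 := sandwich ((Hrep α).B1) H₁.B1 H₂.B1 Q2 Q2i P2 P2i hQ2b hP2a hB1
  have r4 := sandwich ((Hrep α).A3) H₁.A3 H₂.A3 Q1 Q1i P3 P3i hQ1b hP3a hA3
  have r5 := sandwich ((Hrep α).C1) H₁.C1 H₂.C1 Q3 Q3i P3 P3i hQ3b hP3a hC1
  have r6 := sandwich ((Hrep α).B2) H₁.B2 H₂.B2 Q2 Q2i P4 P4i hQ2b hP4a hB2
  have r7 := sandwich ((Hrep α).C2) H₁.C2 H₂.C2 Q3 Q3i P5 P5i hQ3b hP5a hC2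
  obtain ⟨l, c1, c2, c3, c4, c5, c6, c7, c8, -⟩ :=
    coreE7 α α _ _ _ _ _ _ _ _ r1 r2 r3 r4 r5 r6 r7
  have F1 := Efacts l (conj_eq P1 P1i hP1a _ l c1)
  have F2 := Efacts l (conj_eq P2 P2i hP2a _ l c2)
  have F3 := Efacts l (conj_eq P3 P3i hP3a _ l c3)
  have F4 := Efacts l (conj_eq P4 P4i hP4a _ l c4)
  have F5 := Efacts l (conj_eq P5 P5i hP5a _ l c5)
  have F6 := Efacts l (conj_eq Q1 Q1i hQ1a _ l c6)
  have F7 := Efacts l (conj_eq Q2 Q2i hQ2a _ l c7)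
  have F8 := Efacts l (conj_eq Q3 Q3i hQ3a _ l c8)
  by_cases hll : l * l = l
  · have : l * (l - 1) = 0 := by linear_combination hll
    rcases mul_eq_zero.mp this with h0 | h1
    · exact hn1 ⟨F1.1 h0, F2.1 h0, F3.1 h0, F4.1 h0, F5.1 h0, F6.1 h0, F7.1 h0, F8.1 h0⟩
    · have h1 : l = 1 := by linear_combination h1
      exact hn2 ⟨F1.2.1 h1, F2.2.1 h1, F3.2.1 h1, F4.2.1 h1, F5.2.1 h1, F6.2.1 h1,
        F7.2.1 h1, F8.2.1 h1⟩
  · exact hn1 ⟨(F1.2.2 hll).1, (F2.2.2 hll).1, (F3.2.2 hll).1, (F4.2.2 hll).1,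
      (F5.2.2 hll).1, (F6.2.2 hll).1, (F7.2.2 hll).1, (F8.2.2 hll).1⟩

end Aux

/-- The family `H_α` consists of indecomposable representations of `Ẽ₇` with `A1, A2,
A3, B2, C2` injective and `B1, C1` surjective, pairwise nonisomorphic for distinct
parameters; in particular `Ẽ₇` has infinitely many pairwise nonisomorphic
indecomposable representations of this form when `k` is infinite. -/
theorem E7_infinite_family (k : Type u) [Field k] :
    (∀ α : k, (Hrep α).Indec ∧
      Function.Injective (Hrep α).A1.mulVecLin ∧
      Function.Injective (Hrep α).A2.mulVecLin ∧
      Function.Injective (Hrep α).A3.mulVecLin ∧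
      Function.Injective (Hrep α).B2.mulVecLin ∧
      Function.Injective (Hrep α).C2.mulVecLin ∧
      Function.Surjective (Hrep α).B1.mulVecLin ∧
      Function.Surjective (Hrep α).C1.mulVecLin) ∧
    (∀ α β : k, RepE7.IsoRep (Hrep α) (Hrep β) → α = β) ∧
    (Infinite k → ∃ g : ℕ → k, ∀ m n : ℕ, m ≠ n →
      ¬ RepE7.IsoRep (Hrep (g m)) (Hrep (g n))) := by
  refine ⟨fun α => ⟨indecHrep α, ?_, ?_, ?_, ?_, ?_, ?_, ?_⟩, iso_imp_eq, ?_⟩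
  · show Function.Injective
      (Matrix.mulVecLin (!![1,α;1,1;1,0;0,1] : Matrix (Fin 4) (Fin 2) k))
    intro x y hxy
    have h2 := congrFun hxy 2
    have h3 := congrFun hxy 3
    simp [Matrix.mulVecLin_apply, Matrix.mulVec, dotProduct, Fin.sum_univ_two,
      Matrix.vecHead, Matrix.vecTail] at h2 h3
    funext i
    fin_cases i
    · exact h2
    · exact h3
  · show Function.Injective
      (Matrix.mulVecLin (!![1,0,0;0,1,0;0,0,1;0,0,0] : Matrix (Fin 4) (Fin 3) k))
    intro x y hxy
    have h0 := congrFun hxy 0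
    have h1 := congrFun hxy 1
    have h2 := congrFun hxy 2
    simp [Matrix.mulVecLin_apply, Matrix.mulVec, dotProduct, Fin.sum_univ_three,
      Matrix.vecHead, Matrix.vecTail] at h0 h1 h2
    funext i
    fin_cases i
    · exact h0
    · exact h1
    · exact h2
  · show Function.Injective
      (Matrix.mulVecLin (!![0,0,0;0,0,1;0,1,0;1,0,0] : Matrix (Fin 4) (Fin 3) k))
    intro x y hxy
    have h1 := congrFun hxy 1
    have h2 := congrFun hxy 2
    have h3 := congrFun hxy 3
    simp [Matrix.mulVecLin_apply, Matrix.mulVec, dotProduct, Fin.sum_univ_three,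
      Matrix.vecHead, Matrix.vecTail] at h1 h2 h3
    funext i
    fin_cases i
    · exact h3
    · exact h2
    · exact h1
  · show Function.Injective
      (Matrix.mulVecLin (!![1;0] : Matrix (Fin 2) (Fin 1) k))
    intro x y hxy
    have h0 := congrFun hxy 0
    simp [Matrix.mulVecLin_apply, Matrix.mulVec, dotProduct, Fin.sum_univ_one,
      Matrix.vecHead, Matrix.vecTail] at h0
    funext i
    fin_cases i
    exact h0
  · show Function.Injective
      (Matrix.mulVecLin (!![1;0] : Matrix (Fin 2) (Fin 1) k))
    intro x y hxy
    have h0 := congrFun hxy 0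
    simp [Matrix.mulVecLin_apply, Matrix.mulVec, dotProduct, Fin.sum_univ_one,
      Matrix.vecHead, Matrix.vecTail] at h0
    funext i
    fin_cases i
    exact h0
  · show Function.Surjective
      (Matrix.mulVecLin (!![0,1,0;0,0,1] : Matrix (Fin 2) (Fin 3) k))
    intro w
    refine ⟨![0, w 0, w 1], ?_⟩
    funext i
    fin_cases i <;>
      simp [Matrix.mulVecLin_apply, Matrix.mulVec, dotProduct, Fin.sum_univ_three,
        Matrix.vecHead, Matrix.vecTail]
  · show Function.Surjective
      (Matrix.mulVecLin (!![0,1,0;0,0,1] : Matrix (Fin 2) (Fin 3) k))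
    intro w
    refine ⟨![0, w 0, w 1], ?_⟩
    funext i
    fin_cases i <;>
      simp [Matrix.mulVecLin_apply, Matrix.mulVec, dotProduct, Fin.sum_univ_three,
        Matrix.vecHead, Matrix.vecTail]
  · intro hinf
    haveI := hinf
    refine ⟨fun n => Infinite.natEmbedding k n, fun m n hmn hiso => hmn ?_⟩
    exact (Infinite.natEmbedding k).injective (iso_imp_eq _ _ hiso)
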